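/- Let (b_n)_{n≥0} be a decreasing sequence of strictly positive reals with sup_{m,n} (b_{m+n}/b_n)·K^m < ∞ for all K < ∞, and let M be the piecewise linear Orlicz function with M(0)=0 and M'(t) = b_n on (2^{-n-1}, 2^{-n}) for n ≥ 0 (M' = b_0 beyond 1/2). Then for every q < ∞, sup{ M(λt)/(M(λ)·t^q) : 0 < λ, t ≤ 1 } < ∞. -/

import Mathlib

open Filter Topology

/-- An Orlicz function: continuous, non-decreasing, convex on `[0,∞)`, vanishing at `0`,
and tending to `∞`. -/
def IsOrlicz (M : ℝ → ℝ) : Prop :=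
  ContinuousOn M (Set.Ici 0) ∧ MonotoneOn M (Set.Ici 0) ∧
    ConvexOn ℝ (Set.Ici 0) M ∧ M 0 = 0 ∧ Tendsto M atTop atTop

/-- A non-degenerate Orlicz function is strictly positive on `(0,∞)`. -/
def NonDegenerate (M : ℝ → ℝ) : Prop := ∀ t : ℝ, 0 < t → 0 < M t

/-- The Luxemburg norm of a sequence. -/
noncomputable def luxNorm (M : ℝ → ℝ) (a : ℕ → ℝ) : ℝ :=
  sInf {ρ : ℝ | 0 < ρ ∧ Summable (fun n => M (|a n| / ρ)) ∧ ∑' n, M (|a n| / ρ) ≤ 1}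

/-- The Orlicz sequence space `h_M`: sequences with `Σ M(|a n|/ρ) < ∞` for every `ρ > 0`. -/
def hSpace (M : ℝ → ℝ) : Set (ℕ → ℝ) :=
  {a | ∀ ρ : ℝ, 0 < ρ → Summable fun n => M (|a n| / ρ)}

/-- `b k = inf { M(Kt)/M(t) : 0 < t ≤ M⁻¹(1/k) }`; since `M` is strictly increasing,
`t ≤ M⁻¹(1/k)` is expressed as `M t ≤ 1/k`. -/
noncomputable def orliczB (M : ℝ → ℝ) (K : ℝ) (k : ℕ) : ℝ :=
  sInf {r : ℝ | ∃ t : ℝ, 0 < t ∧ M t ≤ 1 / k ∧ r = M (K * t) / M t}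

/-- `M` is the continuous piecewise linear function with `M 0 = 0` and slope `b n` on
`(2^{-n-1}, 2^{-n})` (slope `b 0` beyond `1/2`). -/
def PiecewiseLinOrlicz (b : ℕ → ℝ) (M : ℝ → ℝ) : Prop :=
  M 0 = 0 ∧ ContinuousOn M (Set.Ici 0) ∧
    (∀ n : ℕ, ∀ t ∈ Set.Ioo ((2 : ℝ) ^ (-(n : ℤ) - 1)) ((2 : ℝ) ^ (-(n : ℤ))),
      HasDerivAt M (b n) t) ∧
    (∀ t : ℝ, 1 / 2 < t → HasDerivAt M (b 0) t)

/-- For the piecewise linear Orlicz function `M` built from a decreasing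
positive sequence `(b n)` with `sup_{m,n} (b_{m+n}/b_n) K^m < ∞` for all `K`, one has
`sup_{0<λ,t≤1} M(λt)/(M(λ) t^q) < ∞` for every `q < ∞` (so `h_M` is `c₀`-saturated). -/
noncomputable def ee (n : ℕ) : ℝ := (1/2 : ℝ) ^ n

lemma ee_pos (n : ℕ) : 0 < ee n := by unfold ee; positivity

lemma ee_le_one (n : ℕ) : ee n ≤ 1 := by
  unfold ee; exact pow_le_one₀ (by norm_num) (by norm_num)

lemma ee_succ (n : ℕ) : ee (n+1) = ee n / 2 := by
  unfold ee; rw [pow_succ]; ring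

lemma ee_add (m n : ℕ) : ee (m + n) = ee m * ee n := by
  unfold ee; rw [pow_add]

lemma ee_anti {j k : ℕ} (h : j ≤ k) : ee k ≤ ee j := by
  unfold ee; exact pow_le_pow_of_le_one (by norm_num) (by norm_num) h

lemma ee_zpow (n : ℕ) : (2 : ℝ) ^ (-(n : ℤ)) = ee n := by
  unfold ee
  rw [zpow_neg, zpow_natCast, one_div, inv_pow]

lemma ee_zpow' (n : ℕ) : (2 : ℝ) ^ (-(n : ℤ) - 1) = ee (n+1) := by
  have : (-(n : ℤ) - 1) = -((n+1 : ℕ) : ℤ) := by push_cast; ring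
  rw [this, ee_zpow]

lemma Mseg (b : ℕ → ℝ) (M : ℝ → ℝ) (hPWL : PiecewiseLinOrlicz b M) (n : ℕ) :
    ∀ x ∈ Set.Icc (ee (n+1)) (ee n), M x - M (ee (n+1)) = b n * (x - ee (n+1)) := by
  obtain ⟨hM0, hMcont, hMderiv, -⟩ := hPWL
  set a := ee (n+1)
  set c := ee n
  have hac : a ≤ c := ee_anti (Nat.le_succ n)
  have hderiv : ∀ x ∈ Set.Ioo a c, HasDerivAt (fun y => M y - b n * y) 0 x := by
    intro x hx
    have h1 : HasDerivAt M (b n) x := by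
      have := hMderiv n x
      rw [ee_zpow' n, ee_zpow n] at this
      exact this hx
    have h2 : HasDerivAt (fun y => M y - b n * y) (b n - b n * 1) x :=
      h1.sub ((hasDerivAt_id x).const_mul (b n))
    rwa [mul_one, sub_self] at h2
  have hcont : ContinuousOn (fun y => M y - b n * y) (Set.Icc a c) := by
    apply ContinuousOn.sub
    · exact hMcont.mono (fun x hx => le_trans (ee_pos (n+1)).le hx.1)
    · exact (continuous_const.mul continuous_id).continuousOn
  have hint : Set.Ioo a c = interior (Set.Icc a c) := (interior_Icc).symm
  have hdiff : DifferentiableOn ℝ (fun y => M y - b n * y) (interior (Set.Icc a c)) := by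
    rw [← hint]; intro x hx; exact (hderiv x hx).differentiableAt.differentiableWithinAt
  have hd0 : ∀ x ∈ interior (Set.Icc a c), deriv (fun y => M y - b n * y) x = 0 := by
    rw [← hint]; intro x hx; exact (hderiv x hx).deriv
  have hmono : MonotoneOn (fun y => M y - b n * y) (Set.Icc a c) :=
    monotoneOn_of_deriv_nonneg (convex_Icc a c) hcont hdiff (fun x hx => (hd0 x hx).ge)
  have hanti : AntitoneOn (fun y => M y - b n * y) (Set.Icc a c) :=
    antitoneOn_of_deriv_nonpos (convex_Icc a c) hcont hdiff (fun x hx => (hd0 x hx).le)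
  intro x hx
  have haI : a ∈ Set.Icc a c := ⟨le_refl a, hac⟩
  have h1 := hmono haI hx hx.1
  have h2 := hanti haI hx hx.1
  have : M x - b n * x = M a - b n * a := le_antisymm h2 h1
  linarith

lemma step_eq (b : ℕ → ℝ) (M : ℝ → ℝ) (hPWL : PiecewiseLinOrlicz b M) (n : ℕ) :
    M (ee n) - M (ee (n+1)) = b n * ee (n+1) := by
  have h := Mseg b M hPWL n (ee n) ⟨ee_anti (Nat.le_succ n), le_refl _⟩
  rw [h, ee_succ]; ring

lemma tele_lo (b : ℕ → ℝ) (M : ℝ → ℝ) (hPWL : PiecewiseLinOrlicz b M)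
    (hbpos : ∀ n, 0 < b n) (n N : ℕ) : 0 ≤ M (ee n) - M (ee (n + N)) := by
  induction N with
  | zero => simp
  | succ N ih =>
    have h := step_eq b M hPWL (n + N)
    have hpos : 0 ≤ b (n + N) * ee (n + N + 1) :=
      le_of_lt (mul_pos (hbpos _) (ee_pos _))
    have : n + (N + 1) = (n + N) + 1 := by ring
    rw [this]
    linarith

lemma tele_ub (b : ℕ → ℝ) (M : ℝ → ℝ) (hPWL : PiecewiseLinOrlicz b M)
    (hbdec : Antitone b) (hbpos : ∀ n, 0 < b n) (n N : ℕ) :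
    M (ee n) - M (ee (n + N)) ≤ b n * (ee n - ee (n + N)) := by
  induction N with
  | zero => simp
  | succ N ih =>
    have h := step_eq b M hPWL (n + N)
    have hb : b (n + N) ≤ b n := hbdec (Nat.le_add_right n N)
    have he : ee (n + N) - ee (n + N + 1) = ee (n + N + 1) := by
      rw [ee_succ (n + N)]; ring
    have hpos : 0 ≤ ee (n + N + 1) := (ee_pos _).le
    have : n + (N + 1) = (n + N) + 1 := by ring
    rw [this]
    have hint : b (n + N) * ee (n + N + 1) ≤ b n * ee (n + N + 1) :=
      mul_le_mul_of_nonneg_right hb hpos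
    have hbn : b n * ee (n + N + 1) = b n * (ee (n + N) - ee (n + N + 1)) := by rw [he]
    have key : b n * (ee n - ee (n + N)) + b n * (ee (n + N) - ee (n + N + 1))
        = b n * (ee n - ee (n + N + 1)) := by ring
    linarith

lemma tendsto_Mee (b : ℕ → ℝ) (M : ℝ → ℝ) (hPWL : PiecewiseLinOrlicz b M) :
    Tendsto (fun N : ℕ => M (ee N)) atTop (𝓝 0) := by
  obtain ⟨hM0, hMcont, -, -⟩ := hPWL
  have h1 : Tendsto (fun N : ℕ => ee N) atTop (𝓝 0) :=
    tendsto_pow_atTop_nhds_zero_of_lt_one (by norm_num) (by norm_num)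
  have h2 : Tendsto (fun N : ℕ => ee N) atTop (𝓝[Set.Ici 0] 0) :=
    tendsto_nhdsWithin_of_tendsto_nhds_of_eventually_within _ h1
      (Eventually.of_forall fun N => (ee_pos N).le)
  have h3 : ContinuousWithinAt M (Set.Ici 0) 0 := hMcont 0 Set.self_mem_Ici
  have := h3.tendsto.comp h2
  simpa [hM0, Function.comp_def] using this

lemma tendsto_Mee_shift (b : ℕ → ℝ) (M : ℝ → ℝ) (hPWL : PiecewiseLinOrlicz b M) (n : ℕ) :
    Tendsto (fun N : ℕ => M (ee (n + N))) atTop (𝓝 0) := by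
  have := (tendsto_Mee b M hPWL).comp (tendsto_add_atTop_nat n)
  simpa [Function.comp_def, Nat.add_comm] using this

lemma Mee_nonneg (b : ℕ → ℝ) (M : ℝ → ℝ) (hPWL : PiecewiseLinOrlicz b M)
    (hbpos : ∀ n, 0 < b n) (n : ℕ) : 0 ≤ M (ee n) := by
  have hlim : Tendsto (fun N : ℕ => M (ee n) - M (ee (n + N))) atTop (𝓝 (M (ee n))) := by
    simpa using (tendsto_const_nhds.sub (tendsto_Mee_shift b M hPWL n))
  exact ge_of_tendsto' hlim (fun N => tele_lo b M hPWL hbpos n N)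

lemma Mee_ub (b : ℕ → ℝ) (M : ℝ → ℝ) (hPWL : PiecewiseLinOrlicz b M)
    (hbdec : Antitone b) (hbpos : ∀ n, 0 < b n) (n : ℕ) : M (ee n) ≤ b n * ee n := by
  have hlim : Tendsto (fun N : ℕ => M (ee n) - M (ee (n + N))) atTop (𝓝 (M (ee n))) := by
    simpa using (tendsto_const_nhds.sub (tendsto_Mee_shift b M hPWL n))
  have hbd : ∀ N, M (ee n) - M (ee (n + N)) ≤ b n * ee n := by
    intro N
    have h := tele_ub b M hPWL hbdec hbpos n N
    have : b n * (ee n - ee (n + N)) ≤ b n * ee n := by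
      have := (ee_pos (n + N)).le
      nlinarith [hbpos n, ee_pos (n + N)]
    linarith
  exact le_of_tendsto' hlim hbd

lemma Mee_lb (b : ℕ → ℝ) (M : ℝ → ℝ) (hPWL : PiecewiseLinOrlicz b M)
    (hbpos : ∀ n, 0 < b n) (n : ℕ) : b n * ee (n+1) ≤ M (ee n) := by
  have h := step_eq b M hPWL n
  have h2 := Mee_nonneg b M hPWL hbpos (n+1)
  linarith

lemma Mee_anti (b : ℕ → ℝ) (M : ℝ → ℝ) (hPWL : PiecewiseLinOrlicz b M)
    (hbpos : ∀ n, 0 < b n) {j k : ℕ} (h : j ≤ k) : M (ee k) ≤ M (ee j) := by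
  have := tele_lo b M hPWL hbpos j (k - j)
  rw [Nat.add_sub_cancel' h] at this
  linarith

/-- bucket: every `x ∈ (0,1]` lies in `(ee (n+1), ee n]` for some `n`. -/
lemma bucket (x : ℝ) (hx : 0 < x) (hx1 : x ≤ 1) : ∃ n : ℕ, ee (n+1) < x ∧ x ≤ ee n := by
  have hex : ∃ m : ℕ, ee (m+1) < x := by
    have h1 : Tendsto (fun N : ℕ => ee N) atTop (𝓝 0) :=
      tendsto_pow_atTop_nhds_zero_of_lt_one (by norm_num) (by norm_num)
    have := (h1.eventually (eventually_lt_nhds hx)).exists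
    obtain ⟨m, hm⟩ := this
    exact ⟨m, lt_of_le_of_lt (ee_anti (Nat.le_succ m)) hm⟩
  classical
  refine ⟨Nat.find hex, Nat.find_spec hex, ?_⟩
  rcases Nat.eq_zero_or_pos (Nat.find hex) with h0 | h0
  · rw [h0]; simpa [ee] using hx1
  · have hk : ¬ ee (Nat.find hex - 1 + 1) < x := Nat.find_min hex (by omega)
    have heq : Nat.find hex - 1 + 1 = Nat.find hex := by omega
    rw [heq] at hk
    exact not_lt.mp hk

/-- Monotonicity of `M` on `(0,1]`. -/
lemma M_mono (b : ℕ → ℝ) (M : ℝ → ℝ) (hPWL : PiecewiseLinOrlicz b M)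
    (hbpos : ∀ n, 0 < b n) {x y : ℝ} (hx : 0 < x) (hxy : x ≤ y) (hy : y ≤ 1) :
    M x ≤ M y := by
  obtain ⟨n1, hn1a, hn1b⟩ := bucket x hx (hxy.trans hy)
  obtain ⟨n2, hn2a, hn2b⟩ := bucket y (hx.trans_le hxy) hy
  have hseg1 := Mseg b M hPWL n1
  have hseg2 := Mseg b M hPWL n2
  have hxI : x ∈ Set.Icc (ee (n1+1)) (ee n1) := ⟨hn1a.le, hn1b⟩
  have hyI : y ∈ Set.Icc (ee (n2+1)) (ee n2) := ⟨hn2a.le, hn2b⟩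
  have hle : n2 ≤ n1 := by
    by_contra hcon
    push_neg at hcon
    have h1 : ee (n1+1) < ee n2 := lt_of_lt_of_le (hn1a.trans_le (hxy.trans hn2b)) (le_refl _)
    have h2 : ee n2 ≤ ee (n1+1) := ee_anti (by omega)
    linarith
  rcases eq_or_lt_of_le hle with heq | hlt
  · subst heq
    have h1 := hseg1 x hxI
    have h2 := hseg1 y hyI
    nlinarith [hbpos n2]
  · -- n2 < n1
    have hA : M x ≤ M (ee n1) := by
      have h1 := hseg1 x hxI
      have h2 := hseg1 (ee n1) ⟨ee_anti (Nat.le_succ n1), le_refl _⟩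
      nlinarith [hbpos n1, hxI.2]
    have hB : M (ee n1) ≤ M (ee (n2+1)) := Mee_anti b M hPWL hbpos (by omega)
    have hC : M (ee (n2+1)) ≤ M y := by
      have h2 := hseg2 y hyI
      have h3 := hseg2 (ee (n2+1)) ⟨le_refl _, ee_anti (Nat.le_succ n2)⟩
      nlinarith [hbpos n2, hyI.1]
    linarith
theorem piecewiseLinear_sat_condition (b : ℕ → ℝ) (hbpos : ∀ n, 0 < b n)
    (hbdec : Antitone b)
    (hsup : ∀ K : ℝ, 0 < K → ∃ C : ℝ, ∀ m n : ℕ, b (m + n) / b n * K ^ m ≤ C)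
    (M : ℝ → ℝ) (hPWL : PiecewiseLinOrlicz b M) :
    ∀ q : ℝ, ∃ C : ℝ, ∀ l t : ℝ, 0 < l → l ≤ 1 → 0 < t → t ≤ 1 →
      M (l * t) ≤ C * M l * t ^ q := by
  intro q
  set q' := max q 0 with hq'def
  have hq'0 : 0 ≤ q' := le_max_right q 0
  have hqq' : q ≤ q' := le_max_left q 0
  set K := (2:ℝ) ^ q' with hKdef
  have hK0 : 0 < K := Real.rpow_pos_of_pos (by norm_num) q'
  have hK1 : 1 ≤ K := Real.one_le_rpow (by norm_num) hq'0
  obtain ⟨C₀, hC₀⟩ := hsup K hK0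
  have hC₀1 : 1 ≤ C₀ := by
    have := hC₀ 0 0
    simpa [div_self (hbpos 0).ne'] using this
  have hC₀0 : 0 < C₀ := one_pos.trans_le hC₀1
  refine ⟨2 * C₀ * K ^ 2 + K, ?_⟩
  intro l t hl hl1 ht ht1
  obtain ⟨n, hn1, hn2⟩ := bucket l hl hl1
  obtain ⟨m, hm1, hm2⟩ := bucket t ht ht1
  have hpow : ∀ j : ℕ, (ee j) ^ q' = (K ^ j)⁻¹ := by
    intro j
    have h1 : ee j = ((2:ℝ) ^ j)⁻¹ := by unfold ee; rw [one_div, inv_pow]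
    rw [h1, ← Real.rpow_natCast (2:ℝ) j,
      ← Real.rpow_neg_one ((2:ℝ) ^ ((j:ℝ))),
      ← Real.rpow_mul (by norm_num : (0:ℝ) ≤ 2),
      ← Real.rpow_mul (by norm_num : (0:ℝ) ≤ 2), hKdef,
      ← Real.rpow_natCast ((2:ℝ) ^ q') j,
      ← Real.rpow_mul (by norm_num : (0:ℝ) ≤ 2),
      ← Real.rpow_neg_one ((2:ℝ) ^ (q' * (j:ℝ))),
      ← Real.rpow_mul (by norm_num : (0:ℝ) ≤ 2)]
    ring_nf
  have hMl : b (n+1) * ee (n+2) ≤ M l := by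
    have h1 := Mee_lb b M hPWL hbpos (n+1)
    have h2 := M_mono b M hPWL hbpos (ee_pos (n+1)) hn1.le hl1
    linarith
  have hMlpos : 0 < M l := lt_of_lt_of_le (mul_pos (hbpos _) (ee_pos _)) hMl
  have htq_pos : 0 < t ^ q := Real.rpow_pos_of_pos ht q
  have htq : t ^ q' ≤ t ^ q := Real.rpow_le_rpow_of_exponent_ge ht ht1 hqq'
  have htq2 : (ee (m+1)) ^ q' ≤ t ^ q' := Real.rpow_le_rpow (ee_pos _).le hm1.le hq'0
  have hee_tq : (K ^ (m+1))⁻¹ ≤ t ^ q := by rw [← hpow (m+1)]; exact htq2.trans htq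
  have hlt_pos : 0 < l * t := mul_pos hl ht
  have hlt_le : l * t ≤ ee (n + m) := by
    calc l * t ≤ ee n * ee m := mul_le_mul hn2 hm2 ht.le (ee_pos n).le
    _ = ee (n+m) := (ee_add n m).symm
  have hMlt : M (l * t) ≤ b (n+m) * ee (n+m) := by
    have h1 := M_mono b M hPWL hbpos hlt_pos hlt_le (ee_le_one _)
    have h2 := Mee_ub b M hPWL hbdec hbpos (n+m)
    linarith
  rcases Nat.eq_zero_or_pos m with hm0 | hmp
  · -- m = 0 : t > 1/2, use M (l*t) ≤ M l and K * t^q ≥ 1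
    subst hm0
    have hMLT : M (l * t) ≤ M l :=
      M_mono b M hPWL hbpos hlt_pos (by nlinarith) hl1
    have h2 : K⁻¹ ≤ t ^ q := by simpa using hee_tq
    have hKt : 1 ≤ K * t ^ q := by
      have := mul_le_mul_of_nonneg_left h2 hK0.le
      rwa [mul_inv_cancel₀ hK0.ne'] at this
    have h3 : M l * 1 ≤ M l * (K * t ^ q) := mul_le_mul_of_nonneg_left hKt hMlpos.le
    have h4 : 0 ≤ 2 * C₀ * K ^ 2 * (M l * t ^ q) :=
      mul_nonneg (by positivity) (mul_pos hMlpos htq_pos).le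
    calc M (l * t) ≤ M l := hMLT
    _ ≤ (2 * C₀ * K ^ 2 + K) * M l * t ^ q := by nlinarith
  · -- m ≥ 1
    obtain ⟨m', rfl⟩ : ∃ m', m = m' + 1 := ⟨m - 1, by omega⟩
    have hKm : 0 < K ^ m' := pow_pos hK0 m'
    have hC := hC₀ m' (n+1)
    have hidx : m' + (n+1) = n + (m' + 1) := by omega
    rw [hidx] at hC
    have hb1 : b (n + (m'+1)) * K ^ m' ≤ C₀ * b (n+1) := by
      rw [div_mul_eq_mul_div, div_le_iff₀ (hbpos (n+1))] at hC
      linarith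
    have hb2 : b (n + (m'+1)) ≤ C₀ * b (n+1) / K ^ m' := by
      rw [le_div_iff₀ hKm]; exact hb1
    have hee1 : ee (n + (m'+1)) = 2 * ee (n+2) * ee m' := by
      have h : n + (m'+1) = (n+1) + m' := by omega
      have h2 : ee (n+1) = 2 * ee (n+2) := by rw [ee_succ (n+1)]; ring
      rw [h, ee_add, h2]
    have hKsplit : (1:ℝ) / K ^ m' = K ^ 2 * (K ^ (m'+1+1))⁻¹ := by
      have h : m' + 1 + 1 = m' + 2 := by omega
      rw [h, pow_add]
      field_simp
    have hB : 0 < b (n+1) * ee (n+2) := mul_pos (hbpos _) (ee_pos _)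
    calc M (l * t) ≤ b (n + (m'+1)) * ee (n + (m'+1)) := hMlt
    _ ≤ (C₀ * b (n+1) / K ^ m') * ee (n + (m'+1)) :=
        mul_le_mul_of_nonneg_right hb2 (ee_pos _).le
    _ = 2 * C₀ * (b (n+1) * ee (n+2)) * (ee m' / K ^ m') := by rw [hee1]; ring
    _ ≤ 2 * C₀ * (b (n+1) * ee (n+2)) * (1 / K ^ m') := by
        refine mul_le_mul_of_nonneg_left ?_ (by positivity)
        exact (div_le_div_iff_of_pos_right hKm).mpr (ee_le_one m')
    _ = 2 * C₀ * (b (n+1) * ee (n+2)) * (K ^ 2 * (K ^ (m'+1+1))⁻¹) := by rw [hKsplit]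
    _ ≤ 2 * C₀ * (b (n+1) * ee (n+2)) * (K ^ 2 * t ^ q) := by
        refine mul_le_mul_of_nonneg_left ?_ (by positivity)
        exact mul_le_mul_of_nonneg_left hee_tq (by positivity)
    _ = (2 * C₀ * K ^ 2) * (b (n+1) * ee (n+2)) * t ^ q := by ring
    _ ≤ (2 * C₀ * K ^ 2) * M l * t ^ q := by
        refine mul_le_mul_of_nonneg_right ?_ htq_pos.le
        exact mul_le_mul_of_nonneg_left hMl (by positivity)
    _ ≤ (2 * C₀ * K ^ 2 + K) * M l * t ^ q := by nlinarith [mul_pos hMlpos htq_pos]
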